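/- Let S be a subset of the set of simple roots and let V = {x ∈ E : (x,α) = 0 for all α ∈ S}. If ξ ∈ E satisfies (ξ,α) > 0 for every α ∈ Δ⁺, then the orthogonal projection p of ξ onto V satisfies (p,β) > 0 for every simple root β ∉ S; in particular p ∈ C. (The orthogonal projection of an interior point of the Weyl chamber onto the linear span of a face lies in the relative interior of that face.) -/

import Mathlib

open scoped RealInnerProductSpace
open Finset
theorem projection_onto_face_span
    {E : Type*} [NormedAddCommGroup E] [InnerProductSpace ℝ E] [FiniteDimensional ℝ E]
    (Δ : Finset E)
    (hΔ0 : (0 : E) ∉ Δ)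
    (hΔred : ∀ α ∈ Δ, ∀ t : ℝ, t • α ∈ Δ → t = 1 ∨ t = -1)
    (hΔrefl : ∀ α ∈ Δ, ∀ β ∈ Δ, β - (2 * ⟪β, α⟫ / ⟪α, α⟫) • α ∈ Δ)
    (hΔcrys : ∀ α ∈ Δ, ∀ β ∈ Δ, ∃ n : ℤ, 2 * ⟪β, α⟫ / ⟪α, α⟫ = (n : ℝ))
    (v : E) (hv : ∀ α ∈ Δ, ⟪α, v⟫ ≠ 0)
    (Δpos : Finset E) (hΔpos : Δpos = Δ.filter (fun α => 0 < ⟪α, v⟫))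
    (ρ : E) (hρ : ρ = (2 : ℝ)⁻¹ • ∑ α ∈ Δpos, α)    (S : Finset E)
    (hS : ∀ α ∈ S, α ∈ Δpos ∧ ¬ ∃ β ∈ Δpos, ∃ γ ∈ Δpos, α = β + γ)
    (V : Submodule ℝ E) (hV : V = (Submodule.span ℝ (S : Set E))ᗮ)
    (ξ : E) (hξ : ∀ α ∈ Δpos, 0 < ⟪ξ, α⟫)
    (p : E) (hp : p = (Submodule.orthogonalProjectionOnto V ξ : E)) :
    (∀ β ∈ Δpos, (¬ ∃ β' ∈ Δpos, ∃ γ ∈ Δpos, β = β' + γ) → β ∉ S → 0 < ⟪p, β⟫) ∧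
    (∀ α ∈ Δpos, 0 ≤ ⟪p, α⟫) := by
  classical
  clear hρ
  have hmemΔ : ∀ α ∈ Δpos, α ∈ Δ := by
    intro α hα; rw [hΔpos] at hα; exact (Finset.mem_filter.mp hα).1
  have hposv : ∀ α ∈ Δpos, 0 < ⟪α, v⟫ := by
    intro α hα; rw [hΔpos] at hα; exact (Finset.mem_filter.mp hα).2
  have hne0 : ∀ α ∈ Δ, α ≠ 0 := fun α hα h => hΔ0 (h ▸ hα)
  have hneg : ∀ α ∈ Δ, -α ∈ Δ := by
    intro α hα
    have h0 : ⟪α, α⟫ ≠ 0 := fun h => hne0 α hα (inner_self_eq_zero.mp h)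
    have h := hΔrefl α hα α hα
    rw [show (2 * ⟪α, α⟫ / ⟪α, α⟫ : ℝ) = 2 by field_simp] at h
    have e : α - (2 : ℝ) • α = -α := by module
    rwa [e] at h
  -- distinct simple positive roots pair nonpositively
  have simple_nonpos : ∀ α ∈ Δpos, ∀ β ∈ Δpos,
      (¬ ∃ β' ∈ Δpos, ∃ γ ∈ Δpos, α = β' + γ) →
      (¬ ∃ β' ∈ Δpos, ∃ γ ∈ Δpos, β = β' + γ) →
      α ≠ β → ⟪α, β⟫ ≤ 0 := by
    intro α hα β hβ hsα hsβ hne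
    by_contra hpos
    push_neg at hpos
    have hαΔ := hmemΔ α hα
    have hβΔ := hmemΔ β hβ
    have hα0 := hne0 α hαΔ
    have hβ0 := hne0 β hβΔ
    have hαα : (0:ℝ) < ⟪α, α⟫ :=
      lt_of_le_of_ne real_inner_self_nonneg (Ne.symm (inner_self_ne_zero.mpr hα0))
    have hββ : (0:ℝ) < ⟪β, β⟫ :=
      lt_of_le_of_ne real_inner_self_nonneg (Ne.symm (inner_self_ne_zero.mpr hβ0))
    obtain ⟨n, hn⟩ := hΔcrys α hαΔ β hβΔ
    obtain ⟨m, hm⟩ := hΔcrys β hβΔ α hαΔ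
    have hba : ⟪β, α⟫ = ⟪α, β⟫ := real_inner_comm α β
    have hnpos : (0:ℝ) < (n:ℝ) := by
      rw [← hn, hba]; apply div_pos (by linarith) hαα
    have hmpos : (0:ℝ) < (m:ℝ) := by
      rw [← hm]; apply div_pos (by linarith) hββ
    have hn1 : (1:ℤ) ≤ n := by exact_mod_cast Int.cast_pos.mp (by exact_mod_cast hnpos)
    have hm1 : (1:ℤ) ≤ m := by exact_mod_cast Int.cast_pos.mp (by exact_mod_cast hmpos)
    -- strict Cauchy-Schwarz
    have hCS : ⟪α, β⟫ * ⟪α, β⟫ < ⟪α, α⟫ * ⟪β, β⟫ := by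
      rcases lt_or_eq_of_le (real_inner_mul_inner_self_le α β) with h | h
      · exact h
      · exfalso
        have h1 : ⟪α, α⟫ = ‖α‖ * ‖α‖ := real_inner_self_eq_norm_mul_norm α
        have h2 : ⟪β, β⟫ = ‖β‖ * ‖β‖ := real_inner_self_eq_norm_mul_norm β
        have hnorm : ⟪α, β⟫ = ‖α‖ * ‖β‖ := by
          nlinarith [norm_nonneg α, norm_nonneg β, real_inner_le_norm α β]
        have hsmul := inner_eq_norm_mul_iff_real.mp hnorm
        have hα0' : ‖α‖ ≠ 0 := norm_ne_zero_iff.mpr hα0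
        have hβeq : β = (‖β‖ / ‖α‖) • α := by
          rw [div_eq_inv_mul, mul_smul, hsmul, smul_smul, inv_mul_cancel₀ hα0', one_smul]
        have hβΔ' : (‖β‖ / ‖α‖) • α ∈ Δ := by rwa [hβeq] at hβΔ
        rcases hΔred α hαΔ _ hβΔ' with h1' | h1'
        · exact hne (show α = β by rw [hβeq, h1', one_smul])
        · have hr : (0:ℝ) < ‖β‖ / ‖α‖ :=
            div_pos (norm_pos_iff.mpr hβ0) (norm_pos_iff.mpr hα0)
          rw [h1'] at hr; norm_num at hr
    have hnm4 : (n:ℝ) * (m:ℝ) < 4 := by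
      rw [← hn, ← hm, hba, div_mul_div_comm, div_lt_iff₀ (by positivity)]
      nlinarith
    have hnmZ : n * m < 4 := by exact_mod_cast (by push_cast; linarith : ((n*m : ℤ):ℝ) < (4:ℝ))
    have hcase : n = 1 ∨ m = 1 := by
      by_contra hc
      push_neg at hc
      have : 2 ≤ n := by omega
      have : 2 ≤ m := by omega
      nlinarith
    have hdiff : α - β ∈ Δ := by
      rcases hcase with h1 | h1
      · have h := hΔrefl α hαΔ β hβΔ
        rw [hn, h1] at h
        have e : β - ((1:ℤ):ℝ) • α = -(α - β) := by push_cast; module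
        rw [e] at h
        have := hneg _ h
        rwa [neg_neg] at this
      · have h := hΔrefl β hβΔ α hαΔ
        rw [hm, h1] at h
        have e : α - ((1:ℤ):ℝ) • β = α - β := by push_cast; module
        rwa [e] at h
    have hvd := hv _ hdiff
    have hsubv : ⟪α - β, v⟫ = ⟪α, v⟫ - ⟪β, v⟫ := inner_sub_left α β v
    rcases lt_or_gt_of_ne hvd with hlt | hgt
    · have hmem : β - α ∈ Δpos := by
        rw [hΔpos, Finset.mem_filter]
        have : (-(α - β)) ∈ Δ := hneg _ hdiff
        rw [neg_sub] at this
        refine ⟨this, ?_⟩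
        rw [inner_sub_left]; rw [hsubv] at hlt; linarith
      exact hsβ ⟨β - α, hmem, α, hα, by abel⟩
    · have hmem : α - β ∈ Δpos := by
        rw [hΔpos, Finset.mem_filter]; exact ⟨hdiff, hgt⟩
      exact hsα ⟨α - β, hmem, β, hβ, by abel⟩
  -- projection setup
  subst hV hp
  set W := Submodule.span ℝ (S : Set E) with hW
  set p : E := (Submodule.orthogonalProjectionOnto Wᗮ ξ : E) with hp
  have hpV : p ∈ Wᗮ := SetLike.coe_mem _
  have hq : ξ - p ∈ W := by
    have h := Submodule.sub_starProjection_mem_orthogonal (K := Wᗮ) ξ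
    rwa [Submodule.orthogonal_orthogonal] at h
  have hpS : ∀ α ∈ S, ⟪p, α⟫ = 0 := by
    intro α hα
    have := (Submodule.mem_orthogonal W p).mp hpV α (Submodule.subset_span hα)
    rw [real_inner_comm] at this; exact this
  set q : E := ξ - p with hqdef
  have hqS : ∀ α ∈ S, 0 < ⟪q, α⟫ := by
    intro α hα
    have h1 : ⟪q, α⟫ = ⟪ξ, α⟫ - ⟪p, α⟫ := inner_sub_left ξ p α
    rw [h1, hpS α hα, sub_zero]
    exact hξ α (hS α hα).1
  obtain ⟨c, -, hc⟩ := Submodule.mem_span_finset.mp hq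
  set Sp := S.filter (fun a => 0 ≤ c a) with hSp
  set Sn := S.filter (fun a => ¬ 0 ≤ c a) with hSn
  set qp : E := ∑ a ∈ Sp, c a • a with hqp
  set qn : E := ∑ a ∈ Sn, c a • a with hqn
  have hsplit : qp + qn = q := by
    rw [hqp, hqn, Finset.sum_filter_add_sum_filter_not]; exact hc
  have hann : ∀ a ∈ Sp, 0 ≤ ⟪a, qn⟫ := by
    intro a ha
    rw [hqn, inner_sum]
    apply Finset.sum_nonneg
    intro b hb
    rw [real_inner_smul_right]
    have haS := (Finset.mem_filter.mp ha).1
    have hbS := (Finset.mem_filter.mp hb).1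
    have hcb : c b < 0 := lt_of_not_ge (Finset.mem_filter.mp hb).2
    have hab : a ≠ b := by
      intro h
      exact (Finset.mem_filter.mp hb).2 (h ▸ (Finset.mem_filter.mp ha).2)
    have hip : ⟪a, b⟫ ≤ 0 :=
      simple_nonpos a (hS a haS).1 b (hS b hbS).1 (hS a haS).2 (hS b hbS).2 hab
    nlinarith
  have h2 : 0 ≤ ⟪qp, qn⟫ := by
    rw [hqp, sum_inner]
    apply Finset.sum_nonneg
    intro a ha
    rw [real_inner_smul_left]
    have hca : 0 ≤ c a := (Finset.mem_filter.mp ha).2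
    exact mul_nonneg hca (hann a ha)
  have h1 : ⟪q, qn⟫ ≤ 0 := by
    rw [hqn, inner_sum]
    apply Finset.sum_nonpos
    intro a ha
    rw [real_inner_smul_right]
    have haS := (Finset.mem_filter.mp ha).1
    have hca : c a < 0 := lt_of_not_ge (Finset.mem_filter.mp ha).2
    have := hqS a haS
    nlinarith
  have hqn0 : qn = 0 := by
    have h3 : ⟪qn, qn⟫ ≤ 0 := by
      have : ⟪q, qn⟫ = ⟪qp, qn⟫ + ⟪qn, qn⟫ := by
        rw [← hsplit, inner_add_left]
      linarith
    exact real_inner_self_nonpos.mp h3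
  have hqeq : q = qp := by rw [← hsplit, hqn0, add_zero]
  -- part 1
  have part1 : ∀ β ∈ Δpos, (¬ ∃ β' ∈ Δpos, ∃ γ ∈ Δpos, β = β' + γ) → β ∉ S → 0 < ⟪p, β⟫ := by
    intro β hβ hsβ hβS
    have hqβ : ⟪q, β⟫ ≤ 0 := by
      rw [hqeq, hqp, sum_inner]
      apply Finset.sum_nonpos
      intro a ha
      rw [real_inner_smul_left]
      have haS := (Finset.mem_filter.mp ha).1
      have hca : 0 ≤ c a := (Finset.mem_filter.mp ha).2
      have hab : a ≠ β := fun h => hβS (h ▸ haS)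
      have hip : ⟪a, β⟫ ≤ 0 :=
        simple_nonpos a (hS a haS).1 β hβ (hS a haS).2 hsβ hab
      exact mul_nonpos_of_nonneg_of_nonpos hca hip
    have hdecomp : ⟪q, β⟫ = ⟪ξ, β⟫ - ⟪p, β⟫ := inner_sub_left ξ p β
    have := hξ β hβ
    linarith
  refine ⟨part1, ?_⟩
  -- part 2: strong induction on height
  have part2 : ∀ N : ℕ, ∀ α ∈ Δpos,
      (Δpos.filter fun x => ⟪x, v⟫ < ⟪α, v⟫).card < N → 0 ≤ ⟪p, α⟫ := by
    intro N
    induction N with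
    | zero => intro α _ h; omega
    | succ N ih =>
      intro α hα hcard
      by_cases hsimp : ∃ β ∈ Δpos, ∃ γ ∈ Δpos, α = β + γ
      · obtain ⟨β, hβ, γ, hγ, rfl⟩ := hsimp
        have hβv := hposv β hβ
        have hγv := hposv γ hγ
        have key : ∀ x y : E, x ∈ Δpos → y ∈ Δpos →
            (Δpos.filter fun z => ⟪z, v⟫ < ⟪x, v⟫).card <
            (Δpos.filter fun z => ⟪z, v⟫ < ⟪x + y, v⟫).card := by
          intro x y hx hy
          apply Finset.card_lt_card
          rw [Finset.ssubset_iff_of_subset]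
          · refine ⟨x, ?_, ?_⟩
            · rw [Finset.mem_filter]
              exact ⟨hx, by rw [inner_add_left]; linarith [hposv y hy]⟩
            · intro h
              exact absurd (Finset.mem_filter.mp h).2 (lt_irrefl _)
          · intro z hz
            rw [Finset.mem_filter] at hz ⊢
            refine ⟨hz.1, ?_⟩
            rw [inner_add_left]
            linarith [hz.2, hposv y hy]
        have hβc : (Δpos.filter fun z => ⟪z, v⟫ < ⟪β, v⟫).card < N := by
          have := key β γ hβ hγ; omega
        have hγc : (Δpos.filter fun z => ⟪z, v⟫ < ⟪γ, v⟫).card < N := by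
          have h := key γ β hγ hβ
          have e : γ + β = β + γ := add_comm γ β
          rw [e] at h; omega
        have hpβ := ih β hβ hβc
        have hpγ := ih γ hγ hγc
        rw [inner_add_right]; linarith
      · by_cases hαS : α ∈ S
        · exact le_of_eq (hpS α hαS).symm
        · exact (part1 α hα hsimp hαS).le
  intro α hα
  exact part2 (Δpos.card + 1) α hα (by
    have := Finset.card_filter_le Δpos (fun x => ⟪x, v⟫ < ⟪α, v⟫); omega)
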